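/- Let (Y, d) be a length space, y₀ ∈ Y, and let r, L be real numbers with 0 < r < L. Then in the product metric space Y ×₂ ℝ, the set X₊ = (B((y₀,0), L) \ B((y₀,0), r)) ∩ (Y × [0, ∞)) is path connected, where B(z, ρ) denotes the open metric ball of radius ρ centered at z. -/

import Mathlib

/-- A metric space is a length space if every pair of points is joined by a
minimizing geodesic. -/
def IsLengthSpace (Y : Type*) [MetricSpace Y] : Prop :=
  ∀ x y : Y, ∃ γ : ℝ → Y, γ 0 = x ∧ γ (dist x y) = y ∧
    ∀ s ∈ Set.Icc (0 : ℝ) (dist x y), ∀ t ∈ Set.Icc (0 : ℝ) (dist x y),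
      dist (γ s) (γ t) = |s - t|

theorem upper_half_ball_diff_ball_pathConnected (Y : Type*) [MetricSpace Y]
    (hY : IsLengthSpace Y) (y₀ : Y) (r L : ℝ) (hr : 0 < r) (hrL : r < L) :
    IsPathConnected
      ((Metric.ball ((WithLp.equiv 2 (Y × ℝ)).symm (y₀, 0)) L \
          Metric.ball ((WithLp.equiv 2 (Y × ℝ)).symm (y₀, 0)) r) ∩
        {z : WithLp 2 (Y × ℝ) | 0 ≤ (WithLp.equiv 2 (Y × ℝ) z).2}) := by
  classical
  set e := (WithLp.equiv 2 (Y × ℝ)).symm with he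
  set X := ((Metric.ball (e (y₀, 0)) L \ Metric.ball (e (y₀, 0)) r) ∩
        {z : WithLp 2 (Y × ℝ) | 0 ≤ (WithLp.equiv 2 (Y × ℝ) z).2}) with hX
  have hdist : ∀ (y : Y) (s : ℝ),
      dist (e (y, s)) (e (y₀, 0)) = Real.sqrt (dist y y₀ ^ 2 + s ^ 2) := by
    intro y s
    rw [he]
    have h2 := WithLp.prod_dist_eq_add (p := 2) (by norm_num)
      ((WithLp.equiv 2 (Y × ℝ)).symm (y, s)) ((WithLp.equiv 2 (Y × ℝ)).symm (y₀, 0))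
    simp only [WithLp.equiv_symm_apply, WithLp.toLp_fst, WithLp.toLp_snd] at h2 ⊢
    rw [show (ENNReal.toReal 2) = (2:ℝ) from by norm_num] at h2
    rw [h2, Real.sqrt_eq_rpow]
    congr 1
    rw [show ((2:ℝ)) = ((2:ℕ):ℝ) from by norm_num, Real.rpow_natCast, Real.rpow_natCast,
      Real.dist_eq, sub_zero, sq_abs]
  have hmemX : ∀ (y : Y) (s : ℝ), e (y, s) ∈ X ↔
      (r ≤ Real.sqrt (dist y y₀ ^ 2 + s ^ 2) ∧
        Real.sqrt (dist y y₀ ^ 2 + s ^ 2) < L ∧ 0 ≤ s) := by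
    intro y s
    simp only [hX, Set.mem_inter_iff, Set.mem_diff, Metric.mem_ball, not_lt,
      Set.mem_setOf_eq, hdist, he, Equiv.apply_symm_apply]
    rw [← he, hdist]
    tauto
  set m : ℝ := (r + L) / 2 with hm
  have hm1 : r ≤ m := by rw [hm]; linarith
  have hm2 : m < L := by rw [hm]; linarith
  have hm0 : 0 ≤ m := by linarith
  have hecont : Continuous e := WithLp.prod_continuous_toLp _ _ _
  -- auxiliary: vertical segment joins (y₀, s₁) to (y₀, s₂) for r ≤ sᵢ < L
  have hvert : ∀ s₁ s₂ : ℝ, r ≤ s₁ → s₁ < L → r ≤ s₂ → s₂ < L →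
      JoinedIn X (e (y₀, s₁)) (e (y₀, s₂)) := by
    intro s₁ s₂ h1 h1' h2 h2'
    have hc : Continuous fun u : unitInterval => e (y₀, (1 - (u:ℝ)) * s₁ + u * s₂) :=
      hecont.comp (continuous_const.prodMk (by fun_prop))
    refine ⟨⟨⟨fun u => e (y₀, (1 - (u:ℝ)) * s₁ + u * s₂), hc⟩, by simp, by simp⟩, ?_⟩
    intro u
    obtain ⟨hu0, hu1⟩ := u.2
    set s := (1 - (u:ℝ)) * s₁ + u * s₂ with hs
    have hrs : r ≤ s := by
      have e1 : (1 - (u:ℝ)) * r ≤ (1 - (u:ℝ)) * s₁ :=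
        mul_le_mul_of_nonneg_left h1 (by linarith)
      have e2 : (u:ℝ) * r ≤ (u:ℝ) * s₂ := mul_le_mul_of_nonneg_left h2 hu0
      have : (1 - (u:ℝ)) * r + (u:ℝ) * r = r := by ring
      simp only [hs]; linarith
    have hsL : s < L := by
      rcases lt_or_eq_of_le hu1 with h | h
      · have e1 : (1 - (u:ℝ)) * s₁ < (1 - (u:ℝ)) * L :=
          mul_lt_mul_of_pos_left h1' (by linarith)
        have e2 : (u:ℝ) * s₂ ≤ (u:ℝ) * L := mul_le_mul_of_nonneg_left h2'.le hu0
        have : (1 - (u:ℝ)) * L + (u:ℝ) * L = L := by ring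
        simp only [hs]; linarith
      · have hss : s = s₂ := by simp only [hs, h]; ring
        rw [hss]; exact h2'
    have hs0 : 0 ≤ s := by linarith
    rw [Path.coe_mk_mk, hmemX]
    have hss : Real.sqrt (dist y₀ y₀ ^ 2 + s ^ 2) = s := by
      simp [Real.sqrt_sq hs0]
    rw [hss]
    exact ⟨hrs, hsL, hs0⟩
  have hcmem : e (y₀, m) ∈ X := by
    rw [hmemX]
    have hss : Real.sqrt (dist y₀ y₀ ^ 2 + m ^ 2) = m := by simp [Real.sqrt_sq hm0]
    rw [hss]; exact ⟨hm1, hm2, hm0⟩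
  refine ⟨e (y₀, m), hcmem, ?_⟩
  intro z hz
  set y : Y := (WithLp.equiv 2 (Y × ℝ) z).1 with hy
  set t : ℝ := (WithLp.equiv 2 (Y × ℝ) z).2 with htdef
  have hz' : e (y, t) = z := by
    rw [he, hy, htdef]
    exact (WithLp.equiv 2 (Y × ℝ)).symm_apply_apply z
  rw [← hz'] at hz
  rw [hmemX] at hz
  obtain ⟨hρr, hρL, ht⟩ := hz
  set d : ℝ := dist y₀ y with hd
  have hdyy : dist y y₀ = d := dist_comm y y₀
  rw [hdyy] at hρr hρL
  set ρ : ℝ := Real.sqrt (d ^ 2 + t ^ 2) with hρ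
  have hd0 : 0 ≤ d := dist_nonneg
  have hρ0 : 0 < ρ := lt_of_lt_of_le hr hρr
  have hρsq : ρ ^ 2 = d ^ 2 + t ^ 2 := Real.sq_sqrt (by positivity)
  obtain ⟨γ, hγ0, hγd, hγiso⟩ := hY y₀ y
  -- arc path data
  set v₁ : ℝ → ℝ := fun u => (1 - u) * d with hv₁
  set v₂ : ℝ → ℝ := fun u => (1 - u) * t + u * ρ with hv₂
  set n : ℝ → ℝ := fun u => Real.sqrt (v₁ u ^ 2 + v₂ u ^ 2) with hn
  have hv₂nonneg : ∀ u ∈ Set.Icc (0:ℝ) 1, 0 ≤ v₂ u := by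
    intro u hu
    have h2 : 0 ≤ (1 - u) * t := mul_nonneg (by linarith [hu.2]) ht
    have h3 : 0 ≤ u * ρ := mul_nonneg hu.1 hρ0.le
    simp only [hv₂]; linarith
  have hn_pos : ∀ u ∈ Set.Icc (0:ℝ) 1, 0 < n u := by
    intro u hu
    apply Real.sqrt_pos.2
    rcases lt_or_eq_of_le hu.1 with h | h
    · have h2 : 0 < u * ρ := mul_pos h hρ0
      have h3 : 0 ≤ (1 - u) * t := mul_nonneg (by linarith [hu.2]) ht
      have h4 : 0 < v₂ u := by simp only [hv₂]; linarith
      nlinarith [sq_nonneg (v₁ u)]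
    · have hu0 : u = 0 := h.symm
      subst hu0
      simp only [hv₁, hv₂]
      norm_num
      nlinarith [mul_pos hρ0 hρ0]
  have hn_ge : ∀ u ∈ Set.Icc (0:ℝ) 1, (1 - u) * ρ ≤ n u := by
    intro u hu
    have h1 : ((1 - u) * ρ) ^ 2 ≤ v₁ u ^ 2 + v₂ u ^ 2 := by
      simp only [hv₁, hv₂]
      have h2 : 0 ≤ (1 - u) * t := mul_nonneg (by linarith [hu.2]) ht
      have h3 : 0 ≤ u * ρ := mul_nonneg hu.1 hρ0.le
      have h4 : ((1 - u) * d) ^ 2 + ((1 - u) * t + u * ρ) ^ 2 - ((1 - u) * ρ) ^ 2 =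
          2 * ((1 - u) * t) * (u * ρ) + (u * ρ) ^ 2 := by
        linear_combination (-(1 - u) ^ 2) * hρsq
      nlinarith [mul_nonneg h2 h3, sq_nonneg (u * ρ)]
    have h5 := Real.sqrt_le_sqrt h1
    rwa [Real.sqrt_sq (mul_nonneg (by linarith [hu.2]) hρ0.le)] at h5
  set a : ℝ → ℝ := fun u => ρ * v₁ u / n u with ha
  set b : ℝ → ℝ := fun u => ρ * v₂ u / n u with hb
  have ha_mem : ∀ u ∈ Set.Icc (0:ℝ) 1, a u ∈ Set.Icc 0 d := by
    intro u hu
    have hnp := hn_pos u hu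
    constructor
    · apply div_nonneg _ hnp.le
      exact mul_nonneg hρ0.le (mul_nonneg (by linarith [hu.2]) hd0)
    · rw [div_le_iff₀ hnp]
      have h6 := mul_le_mul_of_nonneg_right (hn_ge u hu) hd0
      have hv1 : v₁ u = (1 - u) * d := rfl
      rw [hv1]
      nlinarith [h6]
  have hb_nonneg : ∀ u ∈ Set.Icc (0:ℝ) 1, 0 ≤ b u :=
    fun u hu => div_nonneg (mul_nonneg hρ0.le (hv₂nonneg u hu)) (hn_pos u hu).le
  have hab_sq : ∀ u ∈ Set.Icc (0:ℝ) 1, a u ^ 2 + b u ^ 2 = ρ ^ 2 := by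
    intro u hu
    have hnp := (hn_pos u hu).ne'
    have hnsq : n u ^ 2 = v₁ u ^ 2 + v₂ u ^ 2 := Real.sq_sqrt (by positivity)
    have key : a u ^ 2 + b u ^ 2 = ρ ^ 2 * (v₁ u ^ 2 + v₂ u ^ 2) / n u ^ 2 := by
      have h7 : a u = ρ * v₁ u / n u := rfl
      have h8 : b u = ρ * v₂ u / n u := rfl
      rw [h7, h8]
      field_simp
    rw [key, ← hnsq, mul_div_assoc, div_self (pow_ne_zero 2 hnp), mul_one]
  have hγdist : ∀ u ∈ Set.Icc (0:ℝ) 1, dist (γ (a u)) y₀ = a u := by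
    intro u hu
    have hmem := ha_mem u hu
    have h9 := hγiso (a u) hmem 0 ⟨le_refl 0, dist_nonneg⟩
    rw [hγ0] at h9
    rw [h9, sub_zero, abs_of_nonneg hmem.1]
  -- membership of arc points
  have harc_mem : ∀ u ∈ Set.Icc (0:ℝ) 1, e (γ (a u), b u) ∈ X := by
    intro u hu
    rw [hmemX]
    have : Real.sqrt (dist (γ (a u)) y₀ ^ 2 + b u ^ 2) = ρ := by
      rw [hγdist u hu, hab_sq u hu, Real.sqrt_sq hρ0.le]
    rw [this]
    exact ⟨hρr, hρL, hb_nonneg u hu⟩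
  -- continuity on I
  have hacont : Continuous fun u : unitInterval => a (u : ℝ) := by
    have h1 : ContinuousOn a (Set.Icc (0:ℝ) 1) := by
      apply ContinuousOn.div
      · fun_prop
      · apply Continuous.continuousOn
        apply Real.continuous_sqrt.comp
        fun_prop
      · intro u hu; exact (hn_pos u hu).ne'
    exact h1.comp_continuous continuous_subtype_val fun u => u.2
  have hbcont : Continuous fun u : unitInterval => b (u : ℝ) := by
    have h1 : ContinuousOn b (Set.Icc (0:ℝ) 1) := by
      apply ContinuousOn.div
      · fun_prop
      · apply Continuous.continuousOn
        apply Real.continuous_sqrt.comp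
        fun_prop
      · intro u hu; exact (hn_pos u hu).ne'
    exact h1.comp_continuous continuous_subtype_val fun u => u.2
  have hγacont : Continuous fun u : unitInterval => γ (a (u : ℝ)) := by
    rw [Metric.continuous_iff]
    intro u ε hε
    obtain ⟨δ, hδ, hδ'⟩ := Metric.continuous_iff.1 hacont u ε hε
    refine ⟨δ, hδ, fun u' hu' => ?_⟩
    have h1 := ha_mem u u.2
    have h2 := ha_mem u' u'.2
    rw [hγiso (a (u' : ℝ)) h2 (a (u : ℝ)) h1, ← Real.dist_eq]
    exact hδ' u' hu'
  have hpathcont : Continuous fun u : unitInterval => e (γ (a (u : ℝ)), b (u : ℝ)) :=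
    hecont.comp (hγacont.prodMk hbcont)
  -- endpoint computations
  have hv10 : v₁ 0 = d := by show (1 - 0) * d = d; ring
  have hv20 : v₂ 0 = t := by show (1 - 0) * t + 0 * ρ = t; ring
  have hv11 : v₁ 1 = 0 := by show (1 - 1) * d = 0; ring
  have hv21 : v₂ 1 = ρ := by show (1 - 1) * t + 1 * ρ = ρ; ring
  have hn0 : n 0 = ρ := by
    have h0 : n 0 = Real.sqrt (v₁ 0 ^ 2 + v₂ 0 ^ 2) := rfl
    rw [h0, hv10, hv20, ← hρ]
  have hn1 : n 1 = ρ := by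
    have h0 : n 1 = Real.sqrt (v₁ 1 ^ 2 + v₂ 1 ^ 2) := rfl
    rw [h0, hv11, hv21]
    norm_num
    exact Real.sqrt_sq hρ0.le
  have ha0 : a 0 = d := by
    have h0 : a 0 = ρ * v₁ 0 / n 0 := rfl
    rw [h0, hv10, hn0, mul_comm, mul_div_assoc, div_self hρ0.ne', mul_one]
  have hb0 : b 0 = t := by
    have h0 : b 0 = ρ * v₂ 0 / n 0 := rfl
    rw [h0, hv20, hn0, mul_comm, mul_div_assoc, div_self hρ0.ne', mul_one]
  have ha1 : a 1 = 0 := by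
    have h0 : a 1 = ρ * v₁ 1 / n 1 := rfl
    rw [h0, hv11, hn1, mul_zero, zero_div]
  have hb1 : b 1 = ρ := by
    have h0 : b 1 = ρ * v₂ 1 / n 1 := rfl
    rw [h0, hv21, hn1, mul_comm, mul_div_assoc, div_self hρ0.ne', mul_one]
  have harc : JoinedIn X z (e (y₀, ρ)) := by
    refine ⟨⟨⟨fun u => e (γ (a (u : ℝ)), b (u : ℝ)), hpathcont⟩, ?_, ?_⟩, ?_⟩
    · show e (γ (a ((0 : unitInterval) : ℝ)), b ((0 : unitInterval) : ℝ)) = z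
      rw [Set.Icc.coe_zero, ha0, hb0]
      have : γ d = y := hγd
      rw [this, hz']
    · show e (γ (a ((1 : unitInterval) : ℝ)), b ((1 : unitInterval) : ℝ)) = e (y₀, ρ)
      rw [Set.Icc.coe_one, ha1, hb1, hγ0]
    · intro u
      exact harc_mem u u.2
  have hρLm : JoinedIn X (e (y₀, ρ)) (e (y₀, m)) := hvert ρ m hρr hρL hm1 hm2
  exact (harc.trans hρLm).symm
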